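/- In an SRI instance where every preference list has length at most 3, suppose M and M' are two stable matchings and uv is an edge of M' that is a (1,2)-pair (v is u's first choice and u is v's second choice). Then rank(u, M(u)) + rank(v, M(v)) ≤ 4, where rank(a, b) is one plus the number of agents a prefers to b. -/

import Mathlib

/-- An instance of the Stable Roommates problem with Incomplete (strict) lists:
a graph together with a rank function, where `rank u v` is one plus the number
of neighbours of `u` that `u` strictly prefers to `v`, and ranks of distinct
neighbours are distinct (strict preferences). -/
structure SRI (V : Type*) [Fintype V] where
  G : SimpleGraph V
  rank : V → V → ℕ
  rank_eq : ∀ u v, G.Adj u v →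
    rank u v = 1 + Set.ncard {w | G.Adj u w ∧ rank u w < rank u v}
  rank_inj : ∀ u v w, G.Adj u v → G.Adj u w → rank u v = rank u w → v = w

variable {V : Type*} [Fintype V]

/-- A matching: a symmetric partial pairing along edges of the graph. -/
structure SRI.Matching (I : SRI V) where
  M : V → Option V
  symm : ∀ u v, M u = some v → M v = some u
  adj : ∀ u v, M u = some v → I.G.Adj u v

/-- Edge `uv` blocks `N`. -/
def SRI.Blocks (I : SRI V) (N : I.Matching) (u v : V) : Prop :=
  I.G.Adj u v ∧ N.M u ≠ some v ∧
  (N.M u = none ∨ ∃ w, N.M u = some w ∧ I.rank u v < I.rank u w) ∧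
  (N.M v = none ∨ ∃ w, N.M v = some w ∧ I.rank v u < I.rank v w)

def SRI.Stable (I : SRI V) (N : I.Matching) : Prop := ∀ u v, ¬ I.Blocks N u v

/-- Cost of a matching: the sum of `rank a (M a)` over matched agents `a`. -/
def SRI.cost (I : SRI V) (N : I.Matching) : ℕ :=
  ∑ v : V, (N.M v).elim 0 (I.rank v)

/-- Every preference list has length at most `d`. -/
def SRI.MaxDeg (I : SRI V) (d : ℕ) : Prop := ∀ v, Set.ncard {w | I.G.Adj v w} ≤ d

/-- An egalitarian stable matching minimises cost among stable matchings. -/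
def SRI.Egalitarian (I : SRI V) (N : I.Matching) : Prop :=
  I.Stable N ∧ ∀ N' : I.Matching, I.Stable N' → I.cost N ≤ I.cost N'

/-- In a 3-SRI instance, if `uv` is a (1,2)-pair of a stable matching `N'`,
then in any stable matching `N` the ranks of the partners of `u` and `v` sum to at most 4. -/
lemma SRI.rank_pos (I : SRI V) {u v : V} (h : I.G.Adj u v) : 1 ≤ I.rank u v := by
  rw [I.rank_eq u v h]; omega

lemma SRI.rank_le_three (I : SRI V) (h3 : I.MaxDeg 3) {u v : V} (h : I.G.Adj u v) :
    I.rank u v ≤ 3 := by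
  have hA : {w | I.G.Adj u w}.Finite := Set.toFinite _
  set S := {w | I.G.Adj u w ∧ I.rank u w < I.rank u v} with hS
  have hvS : v ∉ S := by simp [hS]
  have hsub : insert v S ⊆ {w | I.G.Adj u w} := by
    rintro w (rfl | hw)
    · exact h
    · exact hw.1
  have h1 : (insert v S).ncard ≤ 3 := le_trans (Set.ncard_le_ncard hsub hA) (h3 u)
  have h2 : (insert v S).ncard = S.ncard + 1 := Set.ncard_insert_of_notMem hvS
  rw [I.rank_eq u v h, ← hS]; omega

lemma SRI.chain_absurd (I : SRI V) (N N' : I.Matching)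
    (hN : I.Stable N) (hN' : I.Stable N') {u v b : V}
    (hu' : N'.M u = some v) (hu : N.M u = none)
    (hv : N.M v = some b) (hr : I.rank v b < I.rank v u) : False := by
  classical
  set mat : ℕ → I.Matching := fun k => if k % 2 = 1 then N else N' with hmat
  set x : ℕ → V := fun k => Nat.rec u (fun k xk => ((mat k).M xk).getD u) k with hxdef
  have hstab : ∀ k, I.Stable (mat k) := by
    intro k; simp only [hmat]; split <;> assumption
  have hx0 : x 0 = u := rfl
  have hxs : ∀ k, x (k+1) = ((mat k).M (x k)).getD u := fun k => rfl
  have hmatN : ∀ m, m % 2 = 1 → mat m = N := by intro m h; simp [hmat, h]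
  have hmatN' : ∀ m, m % 2 = 0 → mat m = N' := by intro m h; simp [hmat, h]
  have hx1 : x 1 = v := by
    have h := hxs 0
    rw [hmatN' 0 rfl, hx0, hu'] at h
    exact h
  have hP : ∀ k, 1 ≤ k → (mat k).M (x k) = some (x (k+1)) ∧
      (mat (k+1)).M (x k) = some (x (k-1)) ∧
      I.rank (x k) (x (k+1)) < I.rank (x k) (x (k-1)) := by
    intro k hk
    induction k with
    | zero => omega
    | succ k ih =>
      rcases Nat.lt_or_ge k 1 with h1 | h1
      · -- base case k = 0, proving for index 1
        interval_cases k
        have hm1 : mat 1 = N := hmatN 1 rfl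
        have hm2 : mat 2 = N' := hmatN' 2 rfl
        have hx2 : x 2 = b := by
          have h := hxs 1
          rw [hm1, hx1, hv] at h
          exact h
        refine ⟨?_, ?_, ?_⟩
        · show (mat 1).M (x 1) = some (x 2)
          rw [hm1, hx1, hx2]; exact hv
        · show (mat 2).M (x 1) = some (x 0)
          rw [hm2, hx1, hx0]; exact N'.symm u v hu'
        · show I.rank (x 1) (x 2) < I.rank (x 1) (x 0)
          rw [hx1, hx2, hx0]; exact hr
      · obtain ⟨hA, hB, hrk⟩ := ih h1
        have adjA : I.G.Adj (x k) (x (k+1)) := (mat k).adj _ _ hA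
        have hne : x (k-1) ≠ x (k+1) := by
          intro h; rw [h] at hrk; exact lt_irrefl _ hrk
        have hBne : (mat (k+1)).M (x k) ≠ some (x (k+1)) := by
          rw [hB]; intro h; exact hne (Option.some.inj h)
        have hvcond : ¬ ((mat (k+1)).M (x (k+1)) = none ∨
            ∃ w, (mat (k+1)).M (x (k+1)) = some w ∧
              I.rank (x (k+1)) (x k) < I.rank (x (k+1)) w) := by
          intro hcond
          exact hstab (k+1) (x k) (x (k+1)) ⟨adjA, hBne, Or.inr ⟨x (k-1), hB, hrk⟩, hcond⟩
        push_neg at hvcond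
        obtain ⟨hne2, hvall⟩ := hvcond
        obtain ⟨w, hw⟩ := Option.ne_none_iff_exists'.1 hne2
        have hwa : I.G.Adj (x (k+1)) w := (mat (k+1)).adj _ _ hw
        have hle : I.rank (x (k+1)) w ≤ I.rank (x (k+1)) (x k) := hvall w hw
        have hwne : w ≠ x k := by
          rintro rfl
          exact hBne ((mat (k+1)).symm _ _ hw)
        have hlt : I.rank (x (k+1)) w < I.rank (x (k+1)) (x k) :=
          lt_of_le_of_ne hle
            (fun h => hwne (I.rank_inj (x (k+1)) w (x k) hwa adjA.symm h))
        have hx2' : x (k+2) = w := by rw [hxs (k+1), hw]; rfl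
        have hmm : mat (k+2) = mat k := by
          simp [hmat, Nat.add_mod_right]
        refine ⟨?_, ?_, ?_⟩
        · rw [hx2']
          exact hw
        · have : k + 1 - 1 = k := rfl
          rw [this, hmm]
          exact (mat k).symm _ _ hA
        · have : k + 1 - 1 = k := rfl
          rw [this, hx2']
          exact hlt
  have hmatched : ∀ m, 1 ≤ m → ∃ w, N.M (x m) = some w := by
    intro m hm
    obtain ⟨h1c, h2c, _⟩ := hP m hm
    rcases Nat.mod_two_eq_zero_or_one m with hp | hp
    · have e : mat (m+1) = N := hmatN (m+1) (by omega)
      rw [e] at h2c; exact ⟨_, h2c⟩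
    · have e : mat m = N := hmatN m hp
      rw [e] at h1c; exact ⟨_, h1c⟩
  have hnotu : ∀ m, 1 ≤ m → x m ≠ u := by
    intro m hm h
    obtain ⟨w, hw⟩ := hmatched m hm
    rw [h, hu] at hw
    exact Option.some_ne_none w hw.symm
  have hrep : ∃ k, ∃ j, j < k ∧ x j = x k := by
    obtain ⟨a, c, hac, he⟩ := Finite.exists_ne_map_eq_of_infinite x
    rcases hac.lt_or_gt with h | h
    exacts [⟨c, a, h, he⟩, ⟨a, c, h, he.symm⟩]
  obtain ⟨j, hjk, hxjk⟩ := Nat.find_spec hrep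
  set K := Nat.find hrep with hK
  have hmin : ∀ m, m < K → ¬ ∃ j, j < m ∧ x j = x m := fun m hm => Nat.find_min hrep hm
  have hj1 : 1 ≤ j := by
    by_contra h
    have hj0 : j = 0 := by omega
    exact hnotu K (by omega) (by rw [← hxjk, hj0, hx0])
  have hk1 : 1 ≤ K := by omega
  obtain ⟨hAj, hBj, hrj⟩ := hP j hj1
  obtain ⟨hAk, hBk, hrkK⟩ := hP K hk1
  rcases Nat.mod_two_eq_zero_or_one j with hpj | hpj <;>
    rcases Nat.mod_two_eq_zero_or_one K with hpk | hpk
  · -- both even: use N' backward partners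
    have e1 : mat (j+1) = N := hmatN (j+1) (by omega)
    have e2 : mat (K+1) = N := hmatN (K+1) (by omega)
    rw [e1] at hBj; rw [e2] at hBk
    rw [hxjk, hBk] at hBj
    exact hmin (K-1) (by omega) ⟨j-1, by omega, (Option.some.inj hBj).symm⟩
  · -- j even, K odd: N' has forward partner at j, backward at K
    have e1 : mat j = N' := hmatN' j hpj
    have e2 : mat (K+1) = N' := hmatN' (K+1) (by omega)
    rw [e1] at hAj; rw [e2] at hBk
    have adj : I.G.Adj (x j) (x (j+1)) := N'.adj _ _ hAj
    rw [hxjk, hBk] at hAj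
    have hxe : x (K-1) = x (j+1) := Option.some.inj hAj
    rcases Nat.lt_or_ge (j+1) K with hlt | hge
    · exact hmin (K-1) (by omega) ⟨j+1, by omega, hxe.symm⟩
    · have hK' : K = j + 1 := by omega
      rw [hK'] at hxe
      exact I.G.ne_of_adj adj (by simpa using hxe)
  · -- j odd, K even: N has forward at j, backward at K
    have e1 : mat j = N := hmatN j hpj
    have e2 : mat (K+1) = N := hmatN (K+1) (by omega)
    rw [e1] at hAj; rw [e2] at hBk
    have adj : I.G.Adj (x j) (x (j+1)) := N.adj _ _ hAj
    rw [hxjk, hBk] at hAj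
    have hxe : x (K-1) = x (j+1) := Option.some.inj hAj
    rcases Nat.lt_or_ge (j+1) K with hlt | hge
    · exact hmin (K-1) (by omega) ⟨j+1, by omega, hxe.symm⟩
    · have hK' : K = j + 1 := by omega
      rw [hK'] at hxe
      exact I.G.ne_of_adj adj (by simpa using hxe)
  · -- both odd: use N' backward partners
    have e1 : mat (j+1) = N' := hmatN' (j+1) (by omega)
    have e2 : mat (K+1) = N' := hmatN' (K+1) (by omega)
    rw [e1] at hBj; rw [e2] at hBk
    rw [hxjk, hBk] at hBj
    exact hmin (K-1) (by omega) ⟨j-1, by omega, (Option.some.inj hBj).symm⟩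

theorem stmt2 (I : SRI V) (h3 : I.MaxDeg 3) (N N' : I.Matching)
    (hN : I.Stable N) (hN' : I.Stable N') (u v : V)
    (hm : N'.M u = some v) (h1 : I.rank u v = 1) (h2 : I.rank v u = 2) :
    ∃ a b, N.M u = some a ∧ N.M v = some b ∧ I.rank u a + I.rank v b ≤ 4 := by
  classical
  have hadj : I.G.Adj u v := N'.adj u v hm
  by_cases hc : N.M u = some v
  · exact ⟨v, u, hc, N.symm u v hc, by rw [h1, h2]; omega⟩
  · have hucond : N.M u = none ∨ ∃ w, N.M u = some w ∧ I.rank u v < I.rank u w := by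
      cases hMu : N.M u with
      | none => exact Or.inl rfl
      | some w =>
        refine Or.inr ⟨w, rfl, ?_⟩
        have hwadj := N.adj u w hMu
        have hwne : w ≠ v := fun h => hc (h ▸ hMu)
        have hne1 : I.rank u w ≠ 1 := fun h =>
          hwne (I.rank_inj u w v hwadj hadj (by rw [h, h1]))
        have := I.rank_pos hwadj
        omega
    have hvcond : ¬ (N.M v = none ∨ ∃ w, N.M v = some w ∧ I.rank v u < I.rank v w) :=
      fun h => hN u v ⟨hadj, hc, hucond, h⟩
    push_neg at hvcond
    obtain ⟨hvne, hvall⟩ := hvcond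
    obtain ⟨b, hb⟩ := Option.ne_none_iff_exists'.1 hvne
    have hble : I.rank v b ≤ I.rank v u := hvall b hb
    have hbadj := N.adj v b hb
    have hbneu : b ≠ u := by
      intro h
      apply hc
      have := N.symm v b hb
      rw [h] at this
      exact this
    have hb1 : I.rank v b = 1 := by
      have h2' : I.rank v b ≠ 2 := fun h =>
        hbneu (I.rank_inj v b u hbadj hadj.symm (h.trans h2.symm))
      have := I.rank_pos hbadj
      omega
    cases hMu : N.M u with
    | none => exact (I.chain_absurd N N' hN hN' hm hMu hb (by omega)).elim
    | some a =>
      refine ⟨a, b, rfl, hb, ?_⟩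
      have := I.rank_le_three h3 (N.adj u a hMu)
      omega
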